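/- In the setting of the family of examples, assume moreover the constancy equalities (all α_l, α_r, β_l, β_r values independent of their arguments as in Proposition 'vectores constantes'), set α := α_l(a₀)(a₀,b₀), β_a := β_l(a₀)(a₀,b₀), β_b := β_l(b₀)(a₀,b₀), and let ε ∈ {1,−1} be such that α_l(b₀)(a₀,b₀) = εα, α_r(a₀)(a₀,b₀) = 1/α, α_r(b₀)(a₀,b₀) = ε/α, β_r(a₀)(a₀,b₀) = −β_a/α and β_r(b₀)(a₀,b₀) = −εβ_b/α. Then LBE(S,T) = RBE(S,T) holds for all inclusions S ⊆ T of closed intervals of X³ with h(T) ≤ 1 if and only if β_b(α−1) = β_a(εα−1). -/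

import Mathlib

open Finsupp

namespace BraidPaper

/-- The set of ordered pairs `Y = {(a,b) : a ≤ b}` indexing the basis of the
incidence coalgebra of `X`. -/
abbrev Y (X : Type) [PartialOrder X] : Type := {p : X × X // p.1 ≤ p.2}

/-- The incidence coalgebra `D` of `X`, modelled as the free `K`-module on `Y`. -/
abbrev Inc (K X : Type) [Field K] [PartialOrder X] : Type := Y X →₀ K

/-- `D ⊗ D`, modelled as the free `K`-module on `Y × Y`. -/
abbrev Inc2 (K X : Type) [Field K] [PartialOrder X] : Type := (Y X × Y X) →₀ K

/-- `D ⊗ D ⊗ D`, modelled as the free `K`-module on `Y × Y × Y`. -/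
abbrev Inc3 (K X : Type) [Field K] [PartialOrder X] : Type := (Y X × Y X × Y X) →₀ K

/-- `(D ⊗ D) ⊗ (D ⊗ D)`, modelled as the free `K`-module on `(Y × Y) × (Y × Y)`. -/
abbrev Inc4 (K X : Type) [Field K] [PartialOrder X] : Type :=
  ((Y X × Y X) × (Y X × Y X)) →₀ K

variable {K X : Type} [Field K] [PartialOrder X] [DecidableEq X]
  [@DecidableRel X X (· ≤ ·)] [LocallyFiniteOrder X]

/-- The coefficients `λ_{a|b|c|d}^{e|f|g|h}` of a linear endomorphism of `D ⊗ D`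
(defined to be `0` unless `a ≤ b`, `c ≤ d`, `e ≤ f` and `g ≤ h`). -/
noncomputable def lam (r : Inc2 K X →ₗ[K] Inc2 K X) (a b c d e f g h : X) : K :=
  if h1 : a ≤ b then if h2 : c ≤ d then if h3 : e ≤ f then if h4 : g ≤ h then
    (r (single (⟨(a, b), h1⟩, ⟨(c, d), h2⟩) 1)) (⟨(e, f), h3⟩, ⟨(g, h), h4⟩)
  else 0 else 0 else 0 else 0

/-- The counit of `D ⊗ D`. -/
noncomputable def eps2 : Inc2 K X →ₗ[K] K :=
  Finsupp.lsum K fun pq =>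
    if pq.1.1.1 = pq.1.1.2 ∧ pq.2.1.1 = pq.2.1.2 then LinearMap.id else 0

/-- The comultiplication of `D ⊗ D`. -/
noncomputable def comul2 : Inc2 K X →ₗ[K] Inc4 K X :=
  Finsupp.lsum K fun pq => LinearMap.toSpanSingleton K _ <|
    ∑ x ∈ (Finset.Icc pq.1.1.1 pq.1.1.2).attach,
      ∑ y ∈ (Finset.Icc pq.2.1.1 pq.2.1.2).attach,
        single ((⟨(pq.1.1.1, x.1), (Finset.mem_Icc.mp x.2).1⟩,
                 ⟨(pq.2.1.1, y.1), (Finset.mem_Icc.mp y.2).1⟩),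
                (⟨(x.1, pq.1.1.2), (Finset.mem_Icc.mp x.2).2⟩,
                 ⟨(y.1, pq.2.1.2), (Finset.mem_Icc.mp y.2).2⟩)) (1 : K)

/-- The tensor product `r ⊗ s` of two linear endomorphisms of `D ⊗ D`, in the
free-module model. -/
noncomputable def tmap (r s : Inc2 K X →ₗ[K] Inc2 K X) : Inc4 K X →ₗ[K] Inc4 K X :=
  Finsupp.lsum K fun pq => LinearMap.toSpanSingleton K _ <|
    (r (single pq.1 1)).sum fun p a => (s (single pq.2 1)).sum fun q b =>
      single (p, q) (a * b)

/-- `r` is a coalgebra automorphism of `D ⊗ D`. -/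
def IsCoalgAuto (r : Inc2 K X →ₗ[K] Inc2 K X) : Prop :=
  Function.Bijective ⇑r ∧ comul2 ∘ₗ r = tmap r r ∘ₗ comul2 ∧ eps2 ∘ₗ r = eps2

/-- `D ⊗ ε : D ⊗ D → D`. -/
noncomputable def rcu : Inc2 K X →ₗ[K] Inc K X :=
  Finsupp.lsum K fun pq => LinearMap.toSpanSingleton K _ <|
    if pq.2.1.1 = pq.2.1.2 then single pq.1 (1 : K) else 0

/-- `ε ⊗ D : D ⊗ D → D`. -/
noncomputable def lcu : Inc2 K X →ₗ[K] Inc K X :=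
  Finsupp.lsum K fun pq => LinearMap.toSpanSingleton K _ <|
    if pq.1.1.1 = pq.1.1.2 then single pq.2 (1 : K) else 0

/-- `(D ⊗ σ) ∘ (Δ ⊗ D)` where `σ := (D ⊗ ε) ∘ r`. -/
noncomputable def ndeg1 (r : Inc2 K X →ₗ[K] Inc2 K X) : Inc2 K X →ₗ[K] Inc2 K X :=
  Finsupp.lsum K fun pq => LinearMap.toSpanSingleton K _ <|
    ∑ x ∈ (Finset.Icc pq.1.1.1 pq.1.1.2).attach,
      ((rcu ∘ₗ r) (single ((⟨(x.1, pq.1.1.2), (Finset.mem_Icc.mp x.2).2⟩ : Y X), pq.2) 1)).sum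
        fun s a => single ((⟨(pq.1.1.1, x.1), (Finset.mem_Icc.mp x.2).1⟩ : Y X), s) a

/-- `(τ ⊗ D) ∘ (D ⊗ Δ)` where `τ := (ε ⊗ D) ∘ r`. -/
noncomputable def ndeg2 (r : Inc2 K X →ₗ[K] Inc2 K X) : Inc2 K X →ₗ[K] Inc2 K X :=
  Finsupp.lsum K fun pq => LinearMap.toSpanSingleton K _ <|
    ∑ y ∈ (Finset.Icc pq.2.1.1 pq.2.1.2).attach,
      ((lcu ∘ₗ r) (single (pq.1, (⟨(pq.2.1.1, y.1), (Finset.mem_Icc.mp y.2).1⟩ : Y X)) 1)).sum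
        fun s a => single (s, (⟨(y.1, pq.2.1.2), (Finset.mem_Icc.mp y.2).2⟩ : Y X)) a

/-- `r` is non-degenerate. -/
def NonDeg (r : Inc2 K X →ₗ[K] Inc2 K X) : Prop :=
  Function.Bijective ⇑(ndeg1 r) ∧ Function.Bijective ⇑(ndeg2 r)

/-- The set-map `r₀(a,c) = (ᵃc, aᶜ)` built from left translations `lt` (so
`ᵃc = lt a c`) and right translations `rt` (so `aᶜ = rt a c`). -/
def r0map (lt rt : X → X → X) : X × X → X × X := fun p => (lt p.1 p.2, rt p.1 p.2)

/-- The set-map `r₀` is non-degenerate. -/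
def NonDeg0 (lt rt : X → X → X) : Prop :=
  (∀ a : X, Function.Bijective (lt a)) ∧ (∀ c : X, Function.Bijective (fun a => rt a c))

def m12 (f : X × X → X × X) : X × X × X → X × X × X :=
  fun t => ((f (t.1, t.2.1)).1, (f (t.1, t.2.1)).2, t.2.2)

def m23 (f : X × X → X × X) : X × X × X → X × X × X := fun t => (t.1, f t.2)

/-- `f : X × X → X × X` is a set-theoretic solution of the braid equation. -/
def Braid0 (f : X × X → X × X) : Prop :=
  m12 f ∘ m23 f ∘ m12 f = m23 f ∘ m12 f ∘ m23 f

/-- `r` induces `r₀` on `X × X`. -/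
def Induces (r : Inc2 K X →ₗ[K] Inc2 K X) (lt rt : X → X → X) : Prop :=
  ∀ a c : X,
    r (single (⟨(a, a), le_refl a⟩, ⟨(c, c), le_refl c⟩) 1)
      = single (⟨(lt a c, lt a c), le_refl _⟩, ⟨(rt a c, rt a c), le_refl _⟩) 1

/-- `r ⊗ id` acting on `D ⊗ D ⊗ D`. -/
noncomputable def r12 (r : Inc2 K X →ₗ[K] Inc2 K X) : Inc3 K X →ₗ[K] Inc3 K X :=
  Finsupp.lsum K fun t => LinearMap.toSpanSingleton K _ <|
    (r (single (t.1, t.2.1) 1)).sum fun p a => single (p.1, p.2, t.2.2) a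

/-- `id ⊗ r` acting on `D ⊗ D ⊗ D`. -/
noncomputable def r23 (r : Inc2 K X →ₗ[K] Inc2 K X) : Inc3 K X →ₗ[K] Inc3 K X :=
  Finsupp.lsum K fun t => LinearMap.toSpanSingleton K _ <|
    (r (single t.2 1)).sum fun p a => single (t.1, p) a

/-- The braid equation `r₁₂ ∘ r₂₃ ∘ r₁₂ = r₂₃ ∘ r₁₂ ∘ r₂₃` on `D ⊗ D ⊗ D`. -/
def BraidEqR (r : Inc2 K X →ₗ[K] Inc2 K X) : Prop :=
  r12 r ∘ₗ r23 r ∘ₗ r12 r = r23 r ∘ₗ r12 r ∘ₗ r23 r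

/-- The height of the interval `[a,b]`: the length of its longest chain. -/
noncomputable def hgt (a b : X) : ℕ∞ := Set.chainHeight (Set.Icc a b) (· < ·) - 1

/-- `LBE(S,T)` for `T = [a,b]×[c,d]×[e,f] ⊇ S = [g,h]×[i,j]×[k,l]`. -/
noncomputable def LBE (r : Inc2 K X →ₗ[K] Inc2 K X) (lt rt : X → X → X)
    (a b c d e f g h i j k l : X) : K :=
  ∑ x ∈ Finset.Icc a g, ∑ y ∈ Finset.Icc h b, ∑ w ∈ Finset.Icc c i,
  ∑ z ∈ Finset.Icc j d, ∑ u ∈ Finset.Icc e k, ∑ v ∈ Finset.Icc l f,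
    lam r a b c d (lt a w) (lt a z) (rt x c) (rt y c) *
    lam r (rt x c) (rt y c) e f (lt (rt x c) u) (lt (rt x c) v)
      (rt (rt g c) e) (rt (rt h c) e) *
    lam r (lt a w) (lt a z) (lt (rt x c) u) (lt (rt x c) v)
      (lt a (lt c k)) (lt a (lt c l))
      (rt (lt a i) (lt (rt a i) e)) (rt (lt a j) (lt (rt a j) e))

/-- `RBE(S,T)` for `T = [a,b]×[c,d]×[e,f] ⊇ S = [g,h]×[i,j]×[k,l]`. -/
noncomputable def RBE (r : Inc2 K X →ₗ[K] Inc2 K X) (lt rt : X → X → X)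
    (a b c d e f g h i j k l : X) : K :=
  ∑ x ∈ Finset.Icc a g, ∑ y ∈ Finset.Icc h b, ∑ w ∈ Finset.Icc c i,
  ∑ z ∈ Finset.Icc j d, ∑ u ∈ Finset.Icc e k, ∑ v ∈ Finset.Icc l f,
    lam r c d e f (lt c u) (lt c v) (rt w e) (rt z e) *
    lam r a b (lt c u) (lt c v) (lt a (lt c k)) (lt a (lt c l))
      (rt x (lt c u)) (rt y (lt c u)) *
    lam r (rt x (lt c u)) (rt y (lt c u)) (rt w e) (rt z e)
      (lt (rt a (lt i e)) (rt i e)) (lt (rt a (lt j e)) (rt j e))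
      (rt (rt g c) e) (rt (rt h c) e)

/-- the height of `T = [a,b]×[c,d]×[e,f]`. -/
noncomputable def hgt3 (a b c d e f : X) : ℕ∞ := hgt a b + hgt c d + hgt e f

/-- `LSQ(S,T)` for `T = [a,b]×[c,d] ⊇ S = [e,f]×[g,h]`. -/
noncomputable def LSQ (r : Inc2 K X →ₗ[K] Inc2 K X) (lt rt : X → X → X)
    (a b c d e f g h : X) : K :=
  ∑ x ∈ Finset.Icc a e, ∑ y ∈ Finset.Icc f b, ∑ w ∈ Finset.Icc c g, ∑ z ∈ Finset.Icc h d,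
    lam r a b c d (lt a w) (lt a z) (rt x c) (rt y c) *
    lam r (lt a w) (lt a z) (rt x c) (rt y c)
      (lt (lt a w) (rt e c)) (lt (lt a w) (rt f c))
      (rt (lt a g) (rt x c)) (rt (lt a h) (rt x c))

/-- `RSQ(S,T)` for `T = [a,b]×[c,d] ⊇ S = [e,f]×[g,h]`. -/
def RSQ (K : Type) [Field K] (a b c d e f g h : X) : K :=
  (if a = e then (1 : K) else 0) * (if b = f then 1 else 0) *
  (if c = g then 1 else 0) * (if d = h then 1 else 0)

/-- the height of `T = [a,b]×[c,d]`. -/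
noncomputable def hgt2 (a b c d : X) : ℕ∞ := hgt a b + hgt c d

/-- `r` has set-type square. -/
def SetSq (r : Inc2 K X →ₗ[K] Inc2 K X) (lt rt : X → X → X) : Prop :=
  ∀ (a b c d : X) (hab : a ≤ b) (hcd : c ≤ d)
    (h1 : lt (lt a c) (rt a c) ≤ lt (lt a c) (rt b c))
    (h2 : rt (lt a c) (rt a c) ≤ rt (lt a d) (rt a c)),
    r (r (single (⟨(a, b), hab⟩, ⟨(c, d), hcd⟩) 1))
      = single (⟨(lt (lt a c) (rt a c), lt (lt a c) (rt b c)), h1⟩,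
                ⟨(rt (lt a c) (rt a c), rt (lt a d) (rt a c)), h2⟩) 1

/-- `r` has set-type square up to height 1. -/
def SetSq1 (r : Inc2 K X →ₗ[K] Inc2 K X) (lt rt : X → X → X) : Prop :=
  ∀ (a b c d : X) (hab : a ≤ b) (hcd : c ≤ d), hgt a b + hgt c d = 1 →
    ∀ (h1 : lt (lt a c) (rt a c) ≤ lt (lt a c) (rt b c))
      (h2 : rt (lt a c) (rt a c) ≤ rt (lt a d) (rt a c)),
    r (r (single (⟨(a, b), hab⟩, ⟨(c, d), hcd⟩) 1))
      = single (⟨(lt (lt a c) (rt a c), lt (lt a c) (rt b c)), h1⟩,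
                ⟨(rt (lt a c) (rt a c), rt (lt a d) (rt a c)), h2⟩) 1

/-- `α_r(c)(a,b)` (for translations given by poset automorphisms `φl`, `φr`). -/
noncomputable def alphaR (r : Inc2 K X →ₗ[K] Inc2 K X) (φl φr : X → X) (c a b : X) : K :=
  lam r a b c c (φl c) (φl c) (φr a) (φr b)

/-- `β_r(c)(a,b)`. -/
noncomputable def betaR (r : Inc2 K X →ₗ[K] Inc2 K X) (φl φr : X → X) (c a b : X) : K :=
  lam r a b c c (φl c) (φl c) (φr a) (φr a)

/-- `α_l(c)(a,b)`. -/
noncomputable def alphaL (r : Inc2 K X →ₗ[K] Inc2 K X) (φl φr : X → X) (c a b : X) : K :=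
  lam r c c a b (φl a) (φl b) (φr c) (φr c)

/-- `β_l(c)(a,b)`. -/
noncomputable def betaL (r : Inc2 K X →ₗ[K] Inc2 K X) (φl φr : X → X) (c a b : X) : K :=
  lam r c c a b (φl a) (φl a) (φr c) (φr c)

/-- `Γ_{a|b|c|d}`. -/
noncomputable def Gam (r : Inc2 K X →ₗ[K] Inc2 K X) (φl φr : X → X) (a b c d : X) : K :=
  lam r a b c d (φl c) (φl c) (φr a) (φr a)

/-- `X` is connected. -/
def Connected (X : Type) [PartialOrder X] : Prop :=
  ∀ x y : X, Relation.ReflTransGen (fun a b : X => a ≤ b ∨ b ≤ a) x y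


/-! ### The family of examples: `X = {a₀,…,a_{u−1}, b₀,…,b_{v−1}}` with `aᵢ < bⱼ` -/

/-- The underlying set of the height-one poset of the family of examples. -/
def Xf (u v : ℕ) : Type := Fin u ⊕ Fin v

instance (u v : ℕ) : DecidableEq (Xf u v) :=
  inferInstanceAs (DecidableEq (Fin u ⊕ Fin v))

instance (u v : ℕ) : Fintype (Xf u v) :=
  inferInstanceAs (Fintype (Fin u ⊕ Fin v))

instance (u v : ℕ) : PartialOrder (Xf u v) where
  le x y := x = y ∨ (x.isLeft = true ∧ y.isRight = true)
  le_refl x := Or.inl rfl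
  le_trans x y z hxy hyz := by
    rcases hxy with rfl | ⟨hx, hy⟩
    · exact hyz
    · rcases hyz with rfl | ⟨hy', hz⟩
      · exact Or.inr ⟨hx, hy⟩
      · cases y <;> simp_all
  le_antisymm x y hxy hyx := by
    rcases hxy with rfl | ⟨hx, hy⟩
    · rfl
    · rcases hyx with h | ⟨hy', hx'⟩
      · exact h.symm
      · cases x <;> simp_all

instance (u v : ℕ) : @DecidableRel (Xf u v) (Xf u v) (· ≤ ·) := fun x y =>
  inferInstanceAs (Decidable (x = y ∨ (x.isLeft = true ∧ y.isRight = true)))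

instance (u v : ℕ) : @DecidableRel (Xf u v) (Xf u v) (· < ·) := fun x y =>
  decidable_of_iff (x ≤ y ∧ ¬y ≤ x) lt_iff_le_not_ge.symm

instance (u v : ℕ) : LocallyFiniteOrder (Xf u v) := Fintype.toLocallyFiniteOrder

/-- The minimal elements `a_i`. -/
def Af {u v : ℕ} (i : Fin u) : Xf u v := Sum.inl i

/-- The maximal elements `b_j`. -/
def Bf {u v : ℕ} (j : Fin v) : Xf u v := Sum.inr j

/-- The poset automorphism `φ_l` determined by `σ_a` and `σ_b`. -/
def phiL {u v : ℕ} (σa : Equiv.Perm (Fin u)) (σb : Equiv.Perm (Fin v)) :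
    Xf u v → Xf u v := Sum.map σa σb

/-- The poset automorphism `φ_r` determined by `τ_a` and `τ_b`. -/
def phiR {u v : ℕ} (τa : Equiv.Perm (Fin u)) (τb : Equiv.Perm (Fin v)) :
    Xf u v → Xf u v := Sum.map τa τb

/-- A permutation of `Fin n` is an `n`-cycle (full cycle) iff it acts
transitively. -/
def IsFullCycle {n : ℕ} (ς : Equiv.Perm (Fin n)) : Prop :=
  ∀ i j : Fin n, ∃ m : ℕ, (ς ^ m) i = j

/-- Every element of `K^×` has `n` distinct `n`-th roots. -/
def HasDistinctRoots (K : Type) [Field K] (n : ℕ) : Prop :=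
  ∀ k : K, k ≠ 0 → ∃ S : Finset K, S.card = n ∧ ∀ x ∈ S, x ^ n = k



/-! ### Auxiliary lemmas -/

section AuxGeneric

variable {K X : Type} [Field K] [PartialOrder X] [DecidableEq X]
  [@DecidableRel X X (· ≤ ·)] [LocallyFiniteOrder X]

lemma Ypair_ext {p q : Y X × Y X} (h1 : p.1.1 = q.1.1) (h2 : p.2.1 = q.2.1) : p = q :=
  Prod.ext (Subtype.ext h1) (Subtype.ext h2)

lemma comul2_apply (f : Inc2 K X) {s x t s' y t' : X}
    (hsx : s ≤ x) (hxt : x ≤ t) (hsy : s' ≤ y) (hyt : y ≤ t') :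
    comul2 f ((⟨(s,x),hsx⟩, ⟨(s',y),hsy⟩), (⟨(x,t),hxt⟩, ⟨(y,t'),hyt⟩))
      = f (⟨(s,t),hsx.trans hxt⟩, ⟨(s',t'),hsy.trans hyt⟩) := by
  classical
  set pt : (Y X × Y X) × (Y X × Y X) :=
    ((⟨(s,x),hsx⟩, ⟨(s',y),hsy⟩), (⟨(x,t),hxt⟩, ⟨(y,t'),hyt⟩)) with hpt
  set P0 : Y X × Y X := (⟨(s,t),hsx.trans hxt⟩, ⟨(s',t'),hsy.trans hyt⟩) with hP0
  rw [comul2, Finsupp.lsum_apply, Finsupp.sum_apply]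
  have hsummand : ∀ pq (c : K),
      ((LinearMap.toSpanSingleton K (Inc4 K X)
        (∑ x' ∈ (Finset.Icc pq.1.1.1 pq.1.1.2).attach,
          ∑ y' ∈ (Finset.Icc pq.2.1.1 pq.2.1.2).attach,
            single ((⟨(pq.1.1.1, x'.1), (Finset.mem_Icc.mp x'.2).1⟩,
                     ⟨(pq.2.1.1, y'.1), (Finset.mem_Icc.mp y'.2).1⟩),
                    (⟨(x'.1, pq.1.1.2), (Finset.mem_Icc.mp x'.2).2⟩,
                     ⟨(y'.1, pq.2.1.2), (Finset.mem_Icc.mp y'.2).2⟩)) (1 : K))) c) pt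
      = if pq = P0 then c else 0 := by
    intro pq c
    rw [LinearMap.toSpanSingleton_apply, Finsupp.smul_apply, smul_eq_mul]
    have hM : (∑ x' ∈ (Finset.Icc pq.1.1.1 pq.1.1.2).attach,
          ∑ y' ∈ (Finset.Icc pq.2.1.1 pq.2.1.2).attach,
            single ((⟨(pq.1.1.1, x'.1), (Finset.mem_Icc.mp x'.2).1⟩,
                     ⟨(pq.2.1.1, y'.1), (Finset.mem_Icc.mp y'.2).1⟩),
                    (⟨(x'.1, pq.1.1.2), (Finset.mem_Icc.mp x'.2).2⟩,
                     ⟨(y'.1, pq.2.1.2), (Finset.mem_Icc.mp y'.2).2⟩)) (1 : K)) pt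
        = if pq = P0 then 1 else 0 := by
      rw [Finset.sum_apply']
      by_cases hpq : pq = P0
      · subst hpq
        rw [if_pos rfl]
        have hxmem : x ∈ Finset.Icc (s : X) t := Finset.mem_Icc.mpr ⟨hsx, hxt⟩
        have hymem : y ∈ Finset.Icc (s' : X) t' := Finset.mem_Icc.mpr ⟨hsy, hyt⟩
        rw [Finset.sum_eq_single_of_mem (⟨x, hxmem⟩ : {z // z ∈ Finset.Icc (s : X) t})
            (Finset.mem_attach _ _)]
        · rw [Finset.sum_apply',
            Finset.sum_eq_single_of_mem (⟨y, hymem⟩ : {z // z ∈ Finset.Icc (s' : X) t'})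
              (Finset.mem_attach _ _)]
          · rw [Finsupp.single_apply, if_pos rfl]
          · intro y' _ hy'
            rw [Finsupp.single_apply, if_neg]
            intro hkey
            apply hy'
            apply Subtype.ext
            have := congrArg (fun z => z.1.2.1.2) hkey
            exact this
        · intro x' _ hx'
          rw [Finset.sum_apply']
          apply Finset.sum_eq_zero
          intro y' _
          rw [Finsupp.single_apply, if_neg]
          intro hkey
          apply hx'
          apply Subtype.ext
          have := congrArg (fun z => z.1.1.1.2) hkey
          exact this
      · rw [if_neg hpq]
        apply Finset.sum_eq_zero
        intro x' _
        rw [Finset.sum_apply']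
        apply Finset.sum_eq_zero
        intro y' _
        rw [Finsupp.single_apply, if_neg]
        intro hkey
        apply hpq
        have e1 := congrArg (fun z => z.1.1.1.1) hkey
        have e2 := congrArg (fun z => z.2.1.1.2) hkey
        have e3 := congrArg (fun z => z.1.2.1.1) hkey
        have e4 := congrArg (fun z => z.2.2.1.2) hkey
        simp only at e1 e2 e3 e4
        apply Ypair_ext
        · exact Prod.ext e1 e2
        · exact Prod.ext e3 e4
    rw [hM]
    split <;> ring
  rw [Finsupp.sum_congr (g2 := fun pq c => if pq = P0 then c else 0)
    (fun pq _ => hsummand pq (f pq))]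
  rw [Finsupp.sum_ite_eq' f P0 (fun _ c => c)]
  split
  · rfl
  · exact (Finsupp.notMem_support_iff.mp (by assumption)).symm

lemma tmap_single_apply (r s : Inc2 K X →ₗ[K] Inc2 K X) (P Q B1 B2 : Y X × Y X) :
    tmap r s (single (P,Q) (1:K)) (B1,B2) = r (single P 1) B1 * s (single Q 1) B2 := by
  classical
  rw [tmap, Finsupp.lsum_single, LinearMap.toSpanSingleton_apply, one_smul]
  rw [Finsupp.sum_apply]
  have h1 : ∀ (p : Y X × Y X) (a : K),
      ((s (single Q 1)).sum fun q b => single ((p,q) : (Y X × Y X) × (Y X × Y X)) (a*b)) (B1,B2)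
      = if p = B1 then a * (s (single Q 1)) B2 else 0 := by
    intro p a
    rw [Finsupp.sum_apply]
    by_cases hp : p = B1
    · subst hp
      rw [if_pos rfl]
      have : ∀ (q : Y X × Y X) (b : K),
          (single ((p,q) : (Y X × Y X) × (Y X × Y X)) (a*b)) (p,B2)
          = if q = B2 then a*b else 0 := by
        intro q b
        rw [Finsupp.single_apply]
        by_cases hq : q = B2
        · subst hq; rw [if_pos rfl, if_pos rfl]
        · rw [if_neg hq, if_neg (by intro h; exact hq (congrArg Prod.snd h))]
      rw [Finsupp.sum_congr (g2 := fun q b => if q = B2 then a*b else 0) (fun q _ => this q _)]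
      rw [Finsupp.sum_ite_eq' _ B2 (fun _ b => a*b)]
      split
      · rfl
      · rw [Finsupp.notMem_support_iff.mp (by assumption), mul_zero]
    · rw [if_neg hp]
      rw [Finsupp.sum]
      apply Finset.sum_eq_zero
      intro q _
      rw [Finsupp.single_apply, if_neg (by intro h; exact hp (congrArg Prod.fst h))]
  rw [Finsupp.sum_congr (g2 := fun p a => if p = B1 then a * (s (single Q 1)) B2 else 0)
    (fun p _ => h1 p _)]
  rw [Finsupp.sum_ite_eq' _ B1 (fun _ a => a * (s (single Q 1)) B2)]
  split
  · rfl
  · rw [Finsupp.notMem_support_iff.mp (by assumption), zero_mul]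

end AuxGeneric


section AuxXf
set_option linter.unusedSectionVars false

variable {K : Type} [Field K] {u v : ℕ}

lemma Af_le_Bf (i : Fin u) (j : Fin v) : (Af i : Xf u v) ≤ Bf j := Or.inr ⟨rfl, rfl⟩

lemma Af_ne_Bf (i : Fin u) (j : Fin v) : (Af i : Xf u v) ≠ Bf j := by
  intro h; cases h

lemma Xf_le_strict {x y : Xf u v} (h : x ≤ y) :
    x = y ∨ ∃ (i : Fin u) (j : Fin v), x = Af i ∧ y = Bf j := by
  rcases h with h | ⟨h1, h2⟩
  · exact Or.inl h
  · cases x with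
    | inl i =>
      cases y with
      | inl j => simp [Sum.isRight] at h2
      | inr j => exact Or.inr ⟨i, j, rfl, rfl⟩
    | inr j => simp [Sum.isLeft] at h1

lemma Xf_mem_strict {x : Xf u v} {i : Fin u} {j : Fin v}
    (h1 : Af i ≤ x) (h2 : x ≤ Bf j) : x = Af i ∨ x = Bf j := by
  rcases Xf_le_strict h1 with h | ⟨i', j', hi, hj⟩
  · exact Or.inl h.symm
  · rcases Xf_le_strict h2 with h | ⟨i'', j'', hi', hj'⟩
    · exact Or.inr h
    · rw [hj] at hi'
      simp [Af, Bf] at hi'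

lemma Icc_AB (i : Fin u) (j : Fin v) :
    Finset.Icc (Af i : Xf u v) (Bf j) = {Af i, Bf j} := by
  ext x
  simp only [Finset.mem_Icc, Finset.mem_insert, Finset.mem_singleton]
  constructor
  · rintro ⟨h1, h2⟩
    exact Xf_mem_strict h1 h2
  · rintro (rfl | rfl)
    · exact ⟨le_refl _, Af_le_Bf i j⟩
    · exact ⟨Af_le_Bf i j, le_refl _⟩

lemma Set_Icc_AB (i : Fin u) (j : Fin v) :
    Set.Icc (Af i : Xf u v) (Bf j) = {Af i, Bf j} := by
  ext x
  simp only [Set.mem_Icc, Set.mem_insert_iff, Set.mem_singleton_iff]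
  constructor
  · rintro ⟨h1, h2⟩
    exact Xf_mem_strict h1 h2
  · rintro (rfl | rfl)
    · exact ⟨le_refl _, Af_le_Bf i j⟩
    · exact ⟨Af_le_Bf i j, le_refl _⟩

lemma hgt_self' {X : Type} [PartialOrder X] (x : X) : hgt x x = 0 := by
  rw [hgt, Set.Icc_self]
  rw [← Set.encard_eq_chainHeight_of_isChain _ Set.subsingleton_singleton.isChain,
    Set.encard_singleton]
  rfl

lemma hgt_AB (i : Fin u) (j : Fin v) : hgt (Af i : Xf u v) (Bf j) = 1 := by
  rw [hgt, Set_Icc_AB]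
  have hlt : (Af i : Xf u v) < Bf j :=
    lt_of_le_of_ne (Af_le_Bf i j) (Af_ne_Bf i j)
  have h1 : ({Af i, Bf j} : Set (Xf u v)) = insert (Af i) {Bf j} := rfl
  have h2 : ({Bf j} : Set (Xf u v)) = insert (Bf j) ∅ := by simp
  rw [← Set.encard_eq_chainHeight_of_isChain _
    (IsChain.insert Set.subsingleton_singleton.isChain
      (fun b hb _ => Or.inl (by rw [Set.mem_singleton_iff.mp hb]; exact hlt))),
    Set.encard_pair (Af_ne_Bf i j)]
  rfl

lemma hgt_strict {x y : Xf u v} (h : x ≤ y) (hne : x ≠ y) : hgt x y = 1 := by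
  rcases Xf_le_strict h with h' | ⟨i, j, rfl, rfl⟩
  · exact absurd h' hne
  · exact hgt_AB i j

lemma two_trivial {a b c d e f : Xf u v} (hab : a ≤ b) (hcd : c ≤ d) (hef : e ≤ f)
    (h : hgt3 a b c d e f ≤ 1) :
    (a = b ∧ c = d) ∨ (a = b ∧ e = f) ∨ (c = d ∧ e = f) := by
  by_cases h1 : a = b
  · by_cases h2 : c = d
    · exact Or.inl ⟨h1, h2⟩
    · by_cases h3 : e = f
      · exact Or.inr (Or.inl ⟨h1, h3⟩)
      · exfalso
        rw [hgt3, hgt_strict hcd h2, hgt_strict hef h3] at h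
        have : (2 : ℕ∞) ≤ hgt a b + 1 + 1 := by
          have : (0 : ℕ∞) ≤ hgt a b := zero_le
          calc (2 : ℕ∞) = 0 + 1 + 1 := by norm_num
          _ ≤ hgt a b + 1 + 1 := by gcongr
        exact absurd (le_trans this h) (by norm_num)
  · by_cases h2 : c = d
    · by_cases h3 : e = f
      · exact Or.inr (Or.inr ⟨h2, h3⟩)
      · exfalso
        rw [hgt3, hgt_strict hab h1, hgt_strict hef h3] at h
        have : (2 : ℕ∞) ≤ 1 + hgt c d + 1 := by
          have : (0 : ℕ∞) ≤ hgt c d := zero_le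
          calc (2 : ℕ∞) = 1 + 0 + 1 := by norm_num
          _ ≤ 1 + hgt c d + 1 := by gcongr
        exact absurd (le_trans this h) (by norm_num)
    · exfalso
      rw [hgt3, hgt_strict hab h1, hgt_strict hcd h2] at h
      have : (2 : ℕ∞) ≤ 1 + 1 + hgt e f := by
        have : (0 : ℕ∞) ≤ hgt e f := zero_le
        calc (2 : ℕ∞) = 1 + 1 + 0 := by norm_num
        _ ≤ 1 + 1 + hgt e f := by gcongr
      exact absurd (le_trans this h) (by norm_num)

variable (σa τa : Equiv.Perm (Fin u)) (σb τb : Equiv.Perm (Fin v))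

@[simp] lemma phiL_Af (i : Fin u) : phiL σa σb (Af i : Xf u v) = Af (σa i) := rfl
@[simp] lemma phiL_Bf (j : Fin v) : phiL σa σb (Bf j : Xf u v) = Bf (σb j) := rfl
@[simp] lemma phiR_Af (i : Fin u) : phiR τa τb (Af i : Xf u v) = Af (τa i) := rfl
@[simp] lemma phiR_Bf (j : Fin v) : phiR τa τb (Bf j : Xf u v) = Bf (τb j) := rfl

end AuxXf


section AuxGeneric2
set_option linter.unusedSectionVars false

variable {K X : Type} [Field K] [PartialOrder X] [DecidableEq X]
  [@DecidableRel X X (· ≤ ·)] [LocallyFiniteOrder X]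

lemma lam_eq (r : Inc2 K X →ₗ[K] Inc2 K X) (a b c d e f g h : X)
    (h1 : a ≤ b) (h2 : c ≤ d) (h3 : e ≤ f) (h4 : g ≤ h) :
    lam r a b c d e f g h
      = (r (single (⟨(a,b),h1⟩, ⟨(c,d),h2⟩) 1)) (⟨(e,f),h3⟩, ⟨(g,h),h4⟩) := by
  rw [lam, dif_pos h1, dif_pos h2, dif_pos h3, dif_pos h4]

lemma eps2_apply (f : Inc2 K X) :
    eps2 f = f.sum fun pq c =>
      if pq.1.1.1 = pq.1.1.2 ∧ pq.2.1.1 = pq.2.1.2 then c else 0 := by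
  rw [eps2, Finsupp.lsum_apply]
  apply Finsupp.sum_congr
  intro pq _
  split <;> simp

end AuxGeneric2

section AuxXf2
set_option linter.unusedSectionVars false

variable {K : Type} [Field K] {u v : ℕ}
  (σa τa : Equiv.Perm (Fin u)) (σb τb : Equiv.Perm (Fin v))
  (r : Inc2 K (Xf u v) →ₗ[K] Inc2 K (Xf u v))

lemma factA (hind : Induces r (fun _ y => phiL σa σb y) (fun x _ => phiR τa τb x))
    (s t e f g h : Xf u v) :
    lam r s s t t e f g h =
      if e = phiL σa σb t ∧ f = phiL σa σb t ∧ g = phiR τa τb s ∧ h = phiR τa τb s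
      then 1 else 0 := by
  by_cases h3 : e ≤ f
  · by_cases h4 : g ≤ h
    · rw [lam_eq r s s t t e f g h (le_refl s) (le_refl t) h3 h4, hind s t,
        Finsupp.single_apply]
      refine if_congr ?_ rfl rfl
      constructor
      · intro hkey
        exact ⟨(congrArg (fun z : Y (Xf u v) × Y (Xf u v) => z.1.1.1) hkey).symm,
               (congrArg (fun z : Y (Xf u v) × Y (Xf u v) => z.1.1.2) hkey).symm,
               (congrArg (fun z : Y (Xf u v) × Y (Xf u v) => z.2.1.1) hkey).symm,
               (congrArg (fun z : Y (Xf u v) × Y (Xf u v) => z.2.1.2) hkey).symm⟩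
      · rintro ⟨rfl, rfl, rfl, rfl⟩
        exact Ypair_ext rfl rfl
    · have hn : ¬ (e = phiL σa σb t ∧ f = phiL σa σb t ∧ g = phiR τa τb s ∧
          h = phiR τa τb s) := by
        rintro ⟨-, -, rfl, rfl⟩; exact h4 (le_refl _)
      rw [lam, dif_pos (le_refl s), dif_pos (le_refl t), dif_pos h3, dif_neg h4, if_neg hn]
  · have hn : ¬ (e = phiL σa σb t ∧ f = phiL σa σb t ∧ g = phiR τa τb s ∧
        h = phiR τa τb s) := by
      rintro ⟨rfl, rfl, -, -⟩; exact h3 (le_refl _)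
    rw [lam, dif_pos (le_refl s), dif_pos (le_refl t), dif_neg h3, if_neg hn]

end AuxXf2


section AuxXf3
set_option linter.unusedSectionVars false
set_option maxHeartbeats 1000000

variable {K : Type} [Field K] {u v : ℕ}
  (σa τa : Equiv.Perm (Fin u)) (σb τb : Equiv.Perm (Fin v))
  (r : Inc2 K (Xf u v) →ₗ[K] Inc2 K (Xf u v))

lemma factR (hca : IsCoalgAuto r)
    (hind : Induces r (fun _ y => phiL σa σb y) (fun x _ => phiR τa τb x))
    (i0 : Fin u) (j0 : Fin v) (t e f g h : Xf u v) :
    lam r (Af i0) (Bf j0) t t e f g h =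
      if e = phiL σa σb t ∧ f = phiL σa σb t then
        if g = Af (τa i0) ∧ h = Bf (τb j0) then
          alphaR r (phiL σa σb) (phiR τa τb) t (Af i0) (Bf j0)
        else if g = Af (τa i0) ∧ h = Af (τa i0) then
          betaR r (phiL σa σb) (phiR τa τb) t (Af i0) (Bf j0)
        else if g = Bf (τb j0) ∧ h = Bf (τb j0) then
          - betaR r (phiL σa σb) (phiR τa τb) t (Af i0) (Bf j0)
        else 0
      else 0 := by
  classical
  have hab : (Af i0 : Xf u v) ≤ Bf j0 := Af_le_Bf i0 j0
  have hqq' : (Af (τa i0) : Xf u v) ≤ Bf (τb j0) := Af_le_Bf _ _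
  set ξ : Inc2 K (Xf u v) :=
    single (⟨(Af i0, Bf j0), hab⟩, ⟨(t, t), le_refl t⟩) (1 : K) with hξ
  set F : Inc2 K (Xf u v) := r ξ with hF
  -- Step A: compute comul2 ξ
  have stepA : comul2 ξ =
      single ((⟨(Af i0, Af i0), le_refl _⟩, ⟨(t, t), le_refl t⟩),
              (⟨(Af i0, Bf j0), hab⟩, ⟨(t, t), le_refl t⟩)) (1 : K)
      + single ((⟨(Af i0, Bf j0), hab⟩, ⟨(t, t), le_refl t⟩),
              (⟨(Bf j0, Bf j0), le_refl _⟩, ⟨(t, t), le_refl t⟩)) (1 : K) := by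
    rw [hξ, comul2, Finsupp.lsum_single, LinearMap.toSpanSingleton_apply, one_smul]
    have e1 : ∀ x' : {z // z ∈ Finset.Icc (Af i0 : Xf u v) (Bf j0)},
        (∑ y' ∈ (Finset.Icc t t).attach,
          (single ((⟨(Af i0, x'.1), (Finset.mem_Icc.mp x'.2).1⟩,
                   ⟨(t, y'.1), (Finset.mem_Icc.mp y'.2).1⟩),
                  (⟨(x'.1, Bf j0), (Finset.mem_Icc.mp x'.2).2⟩,
                   ⟨(y'.1, t), (Finset.mem_Icc.mp y'.2).2⟩)) (1:K) : Inc4 K (Xf u v)))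
        = (single ((⟨(Af i0, x'.1), (Finset.mem_Icc.mp x'.2).1⟩,
                   ⟨(t, t), le_refl t⟩),
                  (⟨(x'.1, Bf j0), (Finset.mem_Icc.mp x'.2).2⟩,
                   ⟨(t, t), le_refl t⟩)) (1:K) : Inc4 K (Xf u v)) := by
      intro x'
      have htt : (Finset.Icc t t).attach
          = {⟨t, by simp [Finset.mem_Icc]⟩} := by
        ext y'
        simp only [Finset.mem_attach, Finset.mem_singleton, true_iff]
        apply Subtype.ext
        have := Finset.mem_Icc.mp y'.2
        exact le_antisymm this.2 this.1
      rw [htt, Finset.sum_singleton]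
    rw [Finset.sum_congr rfl (fun x' _ => e1 x')]
    have e2 : (∑ x' ∈ (Finset.Icc (Af i0 : Xf u v) (Bf j0)).attach,
          single ((⟨(Af i0, x'.1), (Finset.mem_Icc.mp x'.2).1⟩,
                   ⟨(t, t), le_refl t⟩),
                  (⟨(x'.1, Bf j0), (Finset.mem_Icc.mp x'.2).2⟩,
                   ⟨(t, t), le_refl t⟩)) (1:K))
        = ∑ x ∈ Finset.Icc (Af i0 : Xf u v) (Bf j0),
            (if hx : (Af i0 : Xf u v) ≤ x ∧ x ≤ Bf j0 then
              (single ((⟨(Af i0, x), hx.1⟩,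
                       ⟨(t, t), le_refl t⟩),
                      (⟨(x, Bf j0), hx.2⟩,
                       ⟨(t, t), le_refl t⟩)) (1:K) : Inc4 K (Xf u v))
            else 0) := by
      rw [← Finset.sum_attach (Finset.Icc (Af i0 : Xf u v) (Bf j0))
        (fun x => if hx : (Af i0 : Xf u v) ≤ x ∧ x ≤ Bf j0 then
              (single ((⟨(Af i0, x), hx.1⟩,
                       ⟨(t, t), le_refl t⟩),
                      (⟨(x, Bf j0), hx.2⟩,
                       ⟨(t, t), le_refl t⟩)) (1:K) : Inc4 K (Xf u v))
            else 0)]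
      apply Finset.sum_congr rfl
      intro x' _
      rw [dif_pos (Finset.mem_Icc.mp x'.2)]
    rw [e2, Icc_AB, Finset.sum_insert (by simp only [Finset.mem_singleton]; exact Af_ne_Bf i0 j0), Finset.sum_singleton,
      dif_pos ⟨le_refl _, hab⟩, dif_pos ⟨hab, le_refl _⟩]
  -- Step B: the braid-coefficient recursion
  have hcom := LinearMap.congr_fun hca.2.1 ξ
  rw [LinearMap.comp_apply, LinearMap.comp_apply, stepA, map_add, ← hF] at hcom
  have star : ∀ (s x t1 s' y t1' : Xf u v) (h1 : s ≤ x) (h2 : x ≤ t1)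
      (h3 : s' ≤ y) (h4 : y ≤ t1'),
      F (⟨(s,t1), h1.trans h2⟩, ⟨(s',t1'), h3.trans h4⟩)
        = (if s = phiL σa σb t ∧ x = phiL σa σb t ∧ s' = Af (τa i0) ∧ y = Af (τa i0)
            then F (⟨(x,t1),h2⟩, ⟨(y,t1'),h4⟩) else 0)
          + (if x = phiL σa σb t ∧ t1 = phiL σa σb t ∧ y = Bf (τb j0) ∧ t1' = Bf (τb j0)
            then F (⟨(s,x),h1⟩, ⟨(s',y),h3⟩) else 0) := by
    intro s x t1 s' y t1' h1 h2 h3 h4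
    have happ := congrArg (fun z : Inc4 K (Xf u v) =>
      z ((⟨(s,x),h1⟩, ⟨(s',y),h3⟩), (⟨(x,t1),h2⟩, ⟨(y,t1'),h4⟩))) hcom
    simp only [Finsupp.add_apply] at happ
    rw [comul2_apply F h1 h2 h3 h4, tmap_single_apply, tmap_single_apply,
      hind (Af i0) t, hind (Bf j0) t, ← hF,
      Finsupp.single_apply, Finsupp.single_apply] at happ
    rw [happ]
    congr 1
    · rw [ite_mul, one_mul, zero_mul]
      refine if_congr ?_ rfl rfl
      constructor
      · intro hkey
        exact ⟨(congrArg (fun z : Y (Xf u v) × Y (Xf u v) => z.1.1.1) hkey).symm,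
               (congrArg (fun z : Y (Xf u v) × Y (Xf u v) => z.1.1.2) hkey).symm,
               (congrArg (fun z : Y (Xf u v) × Y (Xf u v) => z.2.1.1) hkey).symm,
               (congrArg (fun z : Y (Xf u v) × Y (Xf u v) => z.2.1.2) hkey).symm⟩
      · rintro ⟨rfl, rfl, rfl, rfl⟩
        exact Ypair_ext rfl rfl
    · rw [mul_ite, mul_one, mul_zero]
      refine if_congr ?_ rfl rfl
      constructor
      · intro hkey
        exact ⟨(congrArg (fun z : Y (Xf u v) × Y (Xf u v) => z.1.1.1) hkey).symm,
               (congrArg (fun z : Y (Xf u v) × Y (Xf u v) => z.1.1.2) hkey).symm,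
               (congrArg (fun z : Y (Xf u v) × Y (Xf u v) => z.2.1.1) hkey).symm,
               (congrArg (fun z : Y (Xf u v) × Y (Xf u v) => z.2.1.2) hkey).symm⟩
      · rintro ⟨rfl, rfl, rfl, rfl⟩
        exact Ypair_ext rfl rfl
  -- Step C: vanishing outside the three points
  have hzero : ∀ (s t1 s' t1' : Xf u v) (hs : s ≤ t1) (hs' : s' ≤ t1'),
      ¬(s = phiL σa σb t ∧ t1 = phiL σa σb t ∧ s' = Af (τa i0) ∧ t1' = Af (τa i0)) →
      ¬(s = phiL σa σb t ∧ t1 = phiL σa σb t ∧ s' = Bf (τb j0) ∧ t1' = Bf (τb j0)) →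
      ¬(s = phiL σa σb t ∧ t1 = phiL σa σb t ∧ s' = Af (τa i0) ∧ t1' = Bf (τb j0)) →
      F (⟨(s,t1),hs⟩, ⟨(s',t1'),hs'⟩) = 0 := by
    intro s t1 s' t1' hs hs' hn1 hn2 hn3
    have h1 := star s s t1 s' s' t1' (le_refl s) hs (le_refl s') hs'
    rw [if_neg hn2, add_zero] at h1
    by_cases hsp : s = phiL σa σb t ∧ s' = Af (τa i0)
    · obtain ⟨hs1, hs2⟩ := hsp
      have h2 := star s t1 t1 s' t1' t1' hs (le_refl t1) hs' (le_refl t1')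
      rw [if_neg hn1, zero_add] at h2
      by_cases ht1 : t1 = phiL σa σb t ∧ t1' = Bf (τb j0)
      · exact absurd ⟨hs1, ht1.1, hs2, ht1.2⟩ hn3
      · rw [if_neg (by tauto)] at h2
        exact h2
    · rw [if_neg (by tauto)] at h1
      exact h1
  -- Step D: counit relation
  have hrel : F (⟨(phiL σa σb t, phiL σa σb t), le_refl _⟩,
        ⟨(Bf (τb j0), Bf (τb j0)), le_refl _⟩)
      = - F (⟨(phiL σa σb t, phiL σa σb t), le_refl _⟩,
        ⟨(Af (τa i0), Af (τa i0)), le_refl _⟩) := by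
    have heps := LinearMap.congr_fun hca.2.2 ξ
    rw [LinearMap.comp_apply, ← hF] at heps
    have hξ0 : eps2 ξ = (0 : K) := by
      rw [hξ, eps2, Finsupp.lsum_single, if_neg (fun hc => Af_ne_Bf i0 j0 hc.1)]
      rfl
    rw [hξ0, eps2_apply] at heps
    set P1 : Y (Xf u v) × Y (Xf u v) :=
      (⟨(phiL σa σb t, phiL σa σb t), le_refl _⟩,
       ⟨(Af (τa i0), Af (τa i0)), le_refl _⟩) with hP1
    set P2 : Y (Xf u v) × Y (Xf u v) :=
      (⟨(phiL σa σb t, phiL σa σb t), le_refl _⟩,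
       ⟨(Bf (τb j0), Bf (τb j0)), le_refl _⟩) with hP2
    set P3 : Y (Xf u v) × Y (Xf u v) :=
      (⟨(phiL σa σb t, phiL σa σb t), le_refl _⟩,
       ⟨(Af (τa i0), Bf (τb j0)), hqq'⟩) with hP3
    have hsub : F.support ⊆ ({P1, P2, P3} : Finset (Y (Xf u v) × Y (Xf u v))) := by
      intro pq hpq
      simp only [Finset.mem_insert, Finset.mem_singleton]
      by_contra hcon
      push_neg at hcon
      obtain ⟨⟨⟨s, t1⟩, hs⟩, ⟨⟨s', t1'⟩, hs'⟩⟩ := pq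
      apply Finsupp.mem_support_iff.mp hpq
      apply hzero s t1 s' t1' hs hs'
      · rintro ⟨rfl, rfl, rfl, rfl⟩
        exact hcon.1 rfl
      · rintro ⟨rfl, rfl, rfl, rfl⟩
        exact hcon.2.1 rfl
      · rintro ⟨rfl, rfl, rfl, rfl⟩
        exact hcon.2.2 rfl
    rw [Finsupp.sum_of_support_subset F hsub _ (fun i _ => by split <;> rfl)] at heps
    have hd12 : P1 ≠ P2 := by
      simp [hP1, hP2, Prod.ext_iff, Subtype.ext_iff, Af, Bf]
    have hd13 : P1 ≠ P3 := by
      simp [hP1, hP3, Prod.ext_iff, Subtype.ext_iff, Af, Bf]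
    have hd23 : P2 ≠ P3 := by
      simp [hP2, hP3, Prod.ext_iff, Subtype.ext_iff, Af, Bf]
    rw [Finset.sum_insert (by simp [hd12, hd13]),
      Finset.sum_insert (by simp [hd23]), Finset.sum_singleton] at heps
    rw [if_pos ⟨rfl, rfl⟩, if_pos ⟨rfl, rfl⟩,
      if_neg (fun hc => Af_ne_Bf _ _ hc.2)] at heps
    linear_combination heps
  -- Step E: assemble
  have lamF : ∀ (e f g h : Xf u v) (h3 : e ≤ f) (h4 : g ≤ h),
      lam r (Af i0) (Bf j0) t t e f g h = F (⟨(e,f),h3⟩, ⟨(g,h),h4⟩) :=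
    fun e f g h h3 h4 => lam_eq r (Af i0) (Bf j0) t t e f g h hab (le_refl t) h3 h4
  have hαval : alphaR r (phiL σa σb) (phiR τa τb) t (Af i0) (Bf j0)
      = F (⟨(phiL σa σb t, phiL σa σb t), le_refl _⟩,
           ⟨(Af (τa i0), Bf (τb j0)), hqq'⟩) :=
    lamF _ _ _ _ (le_refl _) hqq'
  have hβval : betaR r (phiL σa σb) (phiR τa τb) t (Af i0) (Bf j0)
      = F (⟨(phiL σa σb t, phiL σa σb t), le_refl _⟩,
           ⟨(Af (τa i0), Af (τa i0)), le_refl _⟩) :=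
    lamF _ _ _ _ (le_refl _) (le_refl _)
  by_cases h3 : e ≤ f
  · by_cases h4 : g ≤ h
    · rw [lamF e f g h h3 h4]
      by_cases hef : e = phiL σa σb t ∧ f = phiL σa σb t
      · obtain ⟨rfl, rfl⟩ := hef
        rw [if_pos ⟨rfl, rfl⟩]
        by_cases hc1 : g = Af (τa i0) ∧ h = Bf (τb j0)
        · obtain ⟨rfl, rfl⟩ := hc1
          rw [if_pos ⟨rfl, rfl⟩, hαval]
        · rw [if_neg hc1]
          by_cases hc2 : g = Af (τa i0) ∧ h = Af (τa i0)
          · obtain ⟨rfl, rfl⟩ := hc2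
            rw [if_pos ⟨rfl, rfl⟩, hβval]
          · rw [if_neg hc2]
            by_cases hc3 : g = Bf (τb j0) ∧ h = Bf (τb j0)
            · obtain ⟨rfl, rfl⟩ := hc3
              rw [if_pos ⟨rfl, rfl⟩, hβval]
              exact hrel
            · rw [if_neg hc3]
              exact hzero _ _ _ _ h3 h4 (by tauto) (by tauto) (by tauto)
      · rw [if_neg hef]
        exact hzero _ _ _ _ h3 h4 (by tauto) (by tauto) (by tauto)
    · have hn : ¬ (e = phiL σa σb t ∧ f = phiL σa σb t) ∨ True := Or.inr trivial
      rw [lam, dif_pos hab, dif_pos (le_refl t), dif_pos h3, dif_neg h4]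
      by_cases hef : e = phiL σa σb t ∧ f = phiL σa σb t
      · rw [if_pos hef]
        have hn1 : ¬ (g = Af (τa i0) ∧ h = Bf (τb j0)) := by
          rintro ⟨rfl, rfl⟩; exact h4 hqq'
        have hn2 : ¬ (g = Af (τa i0) ∧ h = Af (τa i0)) := by
          rintro ⟨rfl, rfl⟩; exact h4 (le_refl _)
        have hn3 : ¬ (g = Bf (τb j0) ∧ h = Bf (τb j0)) := by
          rintro ⟨rfl, rfl⟩; exact h4 (le_refl _)
        rw [if_neg hn1, if_neg hn2, if_neg hn3]
      · rw [if_neg hef]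
  · have hn : ¬ (e = phiL σa σb t ∧ f = phiL σa σb t) := by
      rintro ⟨rfl, rfl⟩; exact h3 (le_refl _)
    rw [lam, dif_pos hab, dif_pos (le_refl t), dif_neg h3, if_neg hn]


lemma factL (hca : IsCoalgAuto r)
    (hind : Induces r (fun _ y => phiL σa σb y) (fun x _ => phiR τa τb x))
    (i0 : Fin u) (j0 : Fin v) (t e f g h : Xf u v) :
    lam r t t (Af i0) (Bf j0) e f g h =
      if g = phiR τa τb t ∧ h = phiR τa τb t then
        if e = Af (σa i0) ∧ f = Bf (σb j0) then
          alphaL r (phiL σa σb) (phiR τa τb) t (Af i0) (Bf j0)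
        else if e = Af (σa i0) ∧ f = Af (σa i0) then
          betaL r (phiL σa σb) (phiR τa τb) t (Af i0) (Bf j0)
        else if e = Bf (σb j0) ∧ f = Bf (σb j0) then
          - betaL r (phiL σa σb) (phiR τa τb) t (Af i0) (Bf j0)
        else 0
      else 0 := by
  classical
  have hab : (Af i0 : Xf u v) ≤ Bf j0 := Af_le_Bf i0 j0
  have hpp' : (Af (σa i0) : Xf u v) ≤ Bf (σb j0) := Af_le_Bf _ _
  set ξ : Inc2 K (Xf u v) :=
    single (⟨(t, t), le_refl t⟩, ⟨(Af i0, Bf j0), hab⟩) (1 : K) with hξ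
  set F : Inc2 K (Xf u v) := r ξ with hF
  -- Step A: compute comul2 ξ
  have stepA : comul2 ξ =
      single ((⟨(t, t), le_refl t⟩, ⟨(Af i0, Af i0), le_refl _⟩),
              (⟨(t, t), le_refl t⟩, ⟨(Af i0, Bf j0), hab⟩)) (1 : K)
      + single ((⟨(t, t), le_refl t⟩, ⟨(Af i0, Bf j0), hab⟩),
              (⟨(t, t), le_refl t⟩, ⟨(Bf j0, Bf j0), le_refl _⟩)) (1 : K) := by
    rw [hξ, comul2, Finsupp.lsum_single, LinearMap.toSpanSingleton_apply, one_smul]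
    have htt : (Finset.Icc t t).attach
        = {⟨t, by simp [Finset.mem_Icc]⟩} := by
      ext y'
      simp only [Finset.mem_attach, Finset.mem_singleton, true_iff]
      apply Subtype.ext
      have := Finset.mem_Icc.mp y'.2
      exact le_antisymm this.2 this.1
    rw [htt, Finset.sum_singleton]
    have e2 : (∑ y' ∈ (Finset.Icc (Af i0 : Xf u v) (Bf j0)).attach,
          (single ((⟨(t, t), le_refl t⟩,
                   ⟨(Af i0, y'.1), (Finset.mem_Icc.mp y'.2).1⟩),
                  (⟨(t, t), le_refl t⟩,
                   ⟨(y'.1, Bf j0), (Finset.mem_Icc.mp y'.2).2⟩)) (1:K) : Inc4 K (Xf u v)))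
        = ∑ y ∈ Finset.Icc (Af i0 : Xf u v) (Bf j0),
            (if hy : (Af i0 : Xf u v) ≤ y ∧ y ≤ Bf j0 then
              (single ((⟨(t, t), le_refl t⟩,
                       ⟨(Af i0, y), hy.1⟩),
                      (⟨(t, t), le_refl t⟩,
                       ⟨(y, Bf j0), hy.2⟩)) (1:K) : Inc4 K (Xf u v))
            else 0) := by
      rw [← Finset.sum_attach (Finset.Icc (Af i0 : Xf u v) (Bf j0))
        (fun y => if hy : (Af i0 : Xf u v) ≤ y ∧ y ≤ Bf j0 then
              (single ((⟨(t, t), le_refl t⟩,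
                       ⟨(Af i0, y), hy.1⟩),
                      (⟨(t, t), le_refl t⟩,
                       ⟨(y, Bf j0), hy.2⟩)) (1:K) : Inc4 K (Xf u v))
            else 0)]
      apply Finset.sum_congr rfl
      intro y' _
      rw [dif_pos (Finset.mem_Icc.mp y'.2)]
    rw [e2, Icc_AB, Finset.sum_insert (by simp only [Finset.mem_singleton]; exact Af_ne_Bf i0 j0), Finset.sum_singleton,
      dif_pos ⟨le_refl _, hab⟩, dif_pos ⟨hab, le_refl _⟩]
  -- Step B
  have hcom := LinearMap.congr_fun hca.2.1 ξ
  rw [LinearMap.comp_apply, LinearMap.comp_apply, stepA, map_add, ← hF] at hcom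
  have star : ∀ (s x t1 s' y t1' : Xf u v) (h1 : s ≤ x) (h2 : x ≤ t1)
      (h3 : s' ≤ y) (h4 : y ≤ t1'),
      F (⟨(s,t1), h1.trans h2⟩, ⟨(s',t1'), h3.trans h4⟩)
        = (if s = Af (σa i0) ∧ x = Af (σa i0) ∧ s' = phiR τa τb t ∧ y = phiR τa τb t
            then F (⟨(x,t1),h2⟩, ⟨(y,t1'),h4⟩) else 0)
          + (if x = Bf (σb j0) ∧ t1 = Bf (σb j0) ∧ y = phiR τa τb t ∧ t1' = phiR τa τb t
            then F (⟨(s,x),h1⟩, ⟨(s',y),h3⟩) else 0) := by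
    intro s x t1 s' y t1' h1 h2 h3 h4
    have happ := congrArg (fun z : Inc4 K (Xf u v) =>
      z ((⟨(s,x),h1⟩, ⟨(s',y),h3⟩), (⟨(x,t1),h2⟩, ⟨(y,t1'),h4⟩))) hcom
    simp only [Finsupp.add_apply] at happ
    rw [comul2_apply F h1 h2 h3 h4, tmap_single_apply, tmap_single_apply,
      hind t (Af i0), hind t (Bf j0), ← hF,
      Finsupp.single_apply, Finsupp.single_apply] at happ
    rw [happ]
    congr 1
    · rw [ite_mul, one_mul, zero_mul]
      refine if_congr ?_ rfl rfl
      constructor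
      · intro hkey
        exact ⟨(congrArg (fun z : Y (Xf u v) × Y (Xf u v) => z.1.1.1) hkey).symm,
               (congrArg (fun z : Y (Xf u v) × Y (Xf u v) => z.1.1.2) hkey).symm,
               (congrArg (fun z : Y (Xf u v) × Y (Xf u v) => z.2.1.1) hkey).symm,
               (congrArg (fun z : Y (Xf u v) × Y (Xf u v) => z.2.1.2) hkey).symm⟩
      · rintro ⟨rfl, rfl, rfl, rfl⟩
        exact Ypair_ext rfl rfl
    · rw [mul_ite, mul_one, mul_zero]
      refine if_congr ?_ rfl rfl
      constructor
      · intro hkey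
        exact ⟨(congrArg (fun z : Y (Xf u v) × Y (Xf u v) => z.1.1.1) hkey).symm,
               (congrArg (fun z : Y (Xf u v) × Y (Xf u v) => z.1.1.2) hkey).symm,
               (congrArg (fun z : Y (Xf u v) × Y (Xf u v) => z.2.1.1) hkey).symm,
               (congrArg (fun z : Y (Xf u v) × Y (Xf u v) => z.2.1.2) hkey).symm⟩
      · rintro ⟨rfl, rfl, rfl, rfl⟩
        exact Ypair_ext rfl rfl
  -- Step C
  have hzero : ∀ (s t1 s' t1' : Xf u v) (hs : s ≤ t1) (hs' : s' ≤ t1'),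
      ¬(s = Af (σa i0) ∧ t1 = Af (σa i0) ∧ s' = phiR τa τb t ∧ t1' = phiR τa τb t) →
      ¬(s = Bf (σb j0) ∧ t1 = Bf (σb j0) ∧ s' = phiR τa τb t ∧ t1' = phiR τa τb t) →
      ¬(s = Af (σa i0) ∧ t1 = Bf (σb j0) ∧ s' = phiR τa τb t ∧ t1' = phiR τa τb t) →
      F (⟨(s,t1),hs⟩, ⟨(s',t1'),hs'⟩) = 0 := by
    intro s t1 s' t1' hs hs' hn1 hn2 hn3
    have h1 := star s s t1 s' s' t1' (le_refl s) hs (le_refl s') hs'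
    by_cases hsp : s = Af (σa i0) ∧ s' = phiR τa τb t
    · obtain ⟨hs1, hs2⟩ := hsp
      have h2 := star s t1 t1 s' t1' t1' hs (le_refl t1) hs' (le_refl t1')
      rw [if_neg hn1, zero_add] at h2
      by_cases ht1 : t1 = Bf (σb j0) ∧ t1' = phiR τa τb t
      · exact absurd ⟨hs1, ht1.1, hs2, ht1.2⟩ hn3
      · rw [if_neg (by tauto)] at h2
        exact h2
    · rw [if_neg (by tauto)] at h1
      by_cases hsq : s = Bf (σb j0) ∧ t1 = Bf (σb j0) ∧ s' = phiR τa τb t ∧ t1' = phiR τa τb t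
      · exact absurd hsq hn2
      · rw [if_neg hsq, zero_add] at h1
        exact h1
  -- Step D
  have hrel : F (⟨(Bf (σb j0), Bf (σb j0)), le_refl _⟩,
        ⟨(phiR τa τb t, phiR τa τb t), le_refl _⟩)
      = - F (⟨(Af (σa i0), Af (σa i0)), le_refl _⟩,
        ⟨(phiR τa τb t, phiR τa τb t), le_refl _⟩) := by
    have heps := LinearMap.congr_fun hca.2.2 ξ
    rw [LinearMap.comp_apply, ← hF] at heps
    have hξ0 : eps2 ξ = (0 : K) := by
      rw [hξ, eps2, Finsupp.lsum_single, if_neg (fun hc => Af_ne_Bf i0 j0 hc.2)]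
      rfl
    rw [hξ0, eps2_apply] at heps
    set P1 : Y (Xf u v) × Y (Xf u v) :=
      (⟨(Af (σa i0), Af (σa i0)), le_refl _⟩,
       ⟨(phiR τa τb t, phiR τa τb t), le_refl _⟩) with hP1
    set P2 : Y (Xf u v) × Y (Xf u v) :=
      (⟨(Bf (σb j0), Bf (σb j0)), le_refl _⟩,
       ⟨(phiR τa τb t, phiR τa τb t), le_refl _⟩) with hP2
    set P3 : Y (Xf u v) × Y (Xf u v) :=
      (⟨(Af (σa i0), Bf (σb j0)), hpp'⟩,
       ⟨(phiR τa τb t, phiR τa τb t), le_refl _⟩) with hP3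
    have hsub : F.support ⊆ ({P1, P2, P3} : Finset (Y (Xf u v) × Y (Xf u v))) := by
      intro pq hpq
      simp only [Finset.mem_insert, Finset.mem_singleton]
      by_contra hcon
      push_neg at hcon
      obtain ⟨⟨⟨s, t1⟩, hs⟩, ⟨⟨s', t1'⟩, hs'⟩⟩ := pq
      apply Finsupp.mem_support_iff.mp hpq
      apply hzero s t1 s' t1' hs hs'
      · rintro ⟨rfl, rfl, rfl, rfl⟩
        exact hcon.1 rfl
      · rintro ⟨rfl, rfl, rfl, rfl⟩
        exact hcon.2.1 rfl
      · rintro ⟨rfl, rfl, rfl, rfl⟩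
        exact hcon.2.2 rfl
    rw [Finsupp.sum_of_support_subset F hsub _ (fun i _ => by split <;> rfl)] at heps
    have hd12 : P1 ≠ P2 := by
      simp [hP1, hP2, Prod.ext_iff, Subtype.ext_iff, Af, Bf]
    have hd13 : P1 ≠ P3 := by
      simp [hP1, hP3, Prod.ext_iff, Subtype.ext_iff, Af, Bf]
    have hd23 : P2 ≠ P3 := by
      simp [hP2, hP3, Prod.ext_iff, Subtype.ext_iff, Af, Bf]
    rw [Finset.sum_insert (by simp [hd12, hd13]),
      Finset.sum_insert (by simp [hd23]), Finset.sum_singleton] at heps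
    rw [if_pos ⟨rfl, rfl⟩, if_pos ⟨rfl, rfl⟩,
      if_neg (fun hc => Af_ne_Bf _ _ hc.1)] at heps
    linear_combination heps
  -- Step E
  have lamF : ∀ (e f g h : Xf u v) (h3 : e ≤ f) (h4 : g ≤ h),
      lam r t t (Af i0) (Bf j0) e f g h = F (⟨(e,f),h3⟩, ⟨(g,h),h4⟩) :=
    fun e f g h h3 h4 => lam_eq r t t (Af i0) (Bf j0) e f g h (le_refl t) hab h3 h4
  have hαval : alphaL r (phiL σa σb) (phiR τa τb) t (Af i0) (Bf j0)
      = F (⟨(Af (σa i0), Bf (σb j0)), hpp'⟩,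
           ⟨(phiR τa τb t, phiR τa τb t), le_refl _⟩) :=
    lamF _ _ _ _ hpp' (le_refl _)
  have hβval : betaL r (phiL σa σb) (phiR τa τb) t (Af i0) (Bf j0)
      = F (⟨(Af (σa i0), Af (σa i0)), le_refl _⟩,
           ⟨(phiR τa τb t, phiR τa τb t), le_refl _⟩) :=
    lamF _ _ _ _ (le_refl _) (le_refl _)
  by_cases h3 : e ≤ f
  · by_cases h4 : g ≤ h
    · rw [lamF e f g h h3 h4]
      by_cases hgh : g = phiR τa τb t ∧ h = phiR τa τb t
      · obtain ⟨rfl, rfl⟩ := hgh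
        rw [if_pos ⟨rfl, rfl⟩]
        by_cases hc1 : e = Af (σa i0) ∧ f = Bf (σb j0)
        · obtain ⟨rfl, rfl⟩ := hc1
          rw [if_pos ⟨rfl, rfl⟩, hαval]
        · rw [if_neg hc1]
          by_cases hc2 : e = Af (σa i0) ∧ f = Af (σa i0)
          · obtain ⟨rfl, rfl⟩ := hc2
            rw [if_pos ⟨rfl, rfl⟩, hβval]
          · rw [if_neg hc2]
            by_cases hc3 : e = Bf (σb j0) ∧ f = Bf (σb j0)
            · obtain ⟨rfl, rfl⟩ := hc3
              rw [if_pos ⟨rfl, rfl⟩, hβval]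
              exact hrel
            · rw [if_neg hc3]
              exact hzero _ _ _ _ h3 h4 (by tauto) (by tauto) (by tauto)
      · rw [if_neg hgh]
        exact hzero _ _ _ _ h3 h4 (by tauto) (by tauto) (by tauto)
    · have hn : ¬ (g = phiR τa τb t ∧ h = phiR τa τb t) := by
        rintro ⟨rfl, rfl⟩; exact h4 (le_refl _)
      rw [lam, dif_pos (le_refl t), dif_pos hab, dif_pos h3, dif_neg h4, if_neg hn]
  · rw [lam, dif_pos (le_refl t), dif_pos hab, dif_neg h3]
    by_cases hgh : g = phiR τa τb t ∧ h = phiR τa τb t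
    · rw [if_pos hgh]
      have hn1 : ¬ (e = Af (σa i0) ∧ f = Bf (σb j0)) := by
        rintro ⟨rfl, rfl⟩; exact h3 hpp'
      have hn2 : ¬ (e = Af (σa i0) ∧ f = Af (σa i0)) := by
        rintro ⟨rfl, rfl⟩; exact h3 (le_refl _)
      have hn3 : ¬ (e = Bf (σb j0) ∧ f = Bf (σb j0)) := by
        rintro ⟨rfl, rfl⟩; exact h3 (le_refl _)
      rw [if_neg hn1, if_neg hn2, if_neg hn3]
    · rw [if_neg hgh]

end AuxXf3



section AuxXf4
set_option linter.unusedSectionVars false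

variable {K : Type} [Field K] {u v : ℕ}

@[simp] lemma Af_inj_iff {i k : Fin u} : (Af i : Xf u v) = Af k ↔ i = k :=
  ⟨fun h => Sum.inl.inj h, fun h => h ▸ rfl⟩

@[simp] lemma Bf_inj_iff {j l : Fin v} : (Bf j : Xf u v) = Bf l ↔ j = l :=
  ⟨fun h => Sum.inr.inj h, fun h => h ▸ rfl⟩

@[simp] lemma Af_eq_Bf_iff {i : Fin u} {j : Fin v} : (Af i : Xf u v) = Bf j ↔ False := by
  simp [Af, Bf]

@[simp] lemma Bf_eq_Af_iff {i : Fin u} {j : Fin v} : (Bf j : Xf u v) = Af i ↔ False := by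
  simp [Af, Bf]

lemma sum_pair_AB {M : Type} [AddCommMonoid M] (i : Fin u) (j : Fin v)
    (f : Xf u v → M) :
    ∑ x ∈ ({Af i, Bf j} : Finset (Xf u v)), f x = f (Af i) + f (Bf j) :=
  Finset.sum_pair (Af_ne_Bf i j)

@[simp] lemma elim_Af {M : Type} (f : Fin u → M) (g : Fin v → M) (i : Fin u) :
    Sum.elim f g (Af i : Xf u v) = f i := rfl

@[simp] lemma elim_Bf {M : Type} (f : Fin u → M) (g : Fin v → M) (j : Fin v) :
    Sum.elim f g (Bf j : Xf u v) = g j := rfl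

lemma Xf_cases (x : Xf u v) : (∃ i, x = Af i) ∨ ∃ j, x = Bf j := by
  cases x with
  | inl i => exact Or.inl ⟨i, rfl⟩
  | inr j => exact Or.inr ⟨j, rfl⟩

end AuxXf4

set_option maxHeartbeats 3200000 in
/-- in the family of examples, with constant `α`'s and `β`'s,
`LBE(S,T) = RBE(S,T)` holds for all inclusions `S ⊆ T` of closed intervals of
`X³` with `h(T) ≤ 1` iff `β_b(α−1) = β_a(εα−1)`. -/
theorem statement11 {K : Type} [Field K] (u v : ℕ) (hu : 0 < u) (hv : 0 < v)
    (huv : Nat.Coprime u v) (hroots : HasDistinctRoots K (u * v))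
    (σa τa : Equiv.Perm (Fin u)) (σb τb : Equiv.Perm (Fin v))
    (hcomma : Commute σa τa) (hcommb : Commute σb τb)
    (hfca : IsFullCycle (σa * τa)) (hfcb : IsFullCycle (σb * τb))
    (r : Inc2 K (Xf u v) →ₗ[K] Inc2 K (Xf u v))
    (hca : IsCoalgAuto r) (hnd : NonDeg r)
    (hind : Induces r (fun _ y => phiL σa σb y) (fun x _ => phiR τa τb x))
    (hsq1 : SetSq1 r (fun _ y => phiL σa σb y) (fun x _ => phiR τa τb x))
    (α βa βb ε : K) (hα : α ≠ 0) (hε : ε = 1 ∨ ε = -1)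
    (hαla : ∀ (i k : Fin u) (l : Fin v),
      alphaL r (phiL σa σb) (phiR τa τb) (Af i) (Af k) (Bf l) = α)
    (hαlb : ∀ (j : Fin v) (k : Fin u) (l : Fin v),
      alphaL r (phiL σa σb) (phiR τa τb) (Bf j) (Af k) (Bf l) = ε * α)
    (hαra : ∀ (i k : Fin u) (l : Fin v),
      alphaR r (phiL σa σb) (phiR τa τb) (Af i) (Af k) (Bf l) = 1 / α)
    (hαrb : ∀ (j : Fin v) (k : Fin u) (l : Fin v),
      alphaR r (phiL σa σb) (phiR τa τb) (Bf j) (Af k) (Bf l) = ε / α)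
    (hβla : ∀ (i k : Fin u) (l : Fin v),
      betaL r (phiL σa σb) (phiR τa τb) (Af i) (Af k) (Bf l) = βa)
    (hβlb : ∀ (j : Fin v) (k : Fin u) (l : Fin v),
      betaL r (phiL σa σb) (phiR τa τb) (Bf j) (Af k) (Bf l) = βb)
    (hβra : ∀ (i k : Fin u) (l : Fin v),
      betaR r (phiL σa σb) (phiR τa τb) (Af i) (Af k) (Bf l) = -βa / α)
    (hβrb : ∀ (j : Fin v) (k : Fin u) (l : Fin v),
      betaR r (phiL σa σb) (phiR τa τb) (Bf j) (Af k) (Bf l) = -(ε * βb) / α) :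
    (∀ a b c d e f g h i j k l : Xf u v,
      a ≤ g → g ≤ h → h ≤ b → c ≤ i → i ≤ j → j ≤ d → e ≤ k → k ≤ l → l ≤ f →
      hgt3 a b c d e f ≤ 1 →
      LBE r (fun _ y => phiL σa σb y) (fun x _ => phiR τa τb x) a b c d e f g h i j k l
        = RBE r (fun _ y => phiL σa σb y) (fun x _ => phiR τa τb x) a b c d e f g h i j k l)
    ↔ βb * (α - 1) = βa * (ε * α - 1) := by
  classical
  have hFR := factR σa τa σb τb r hca hind
  have hFL := factL σa τa σb τb r hca hind
  have hFA := factA σa τa σb τb r hind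
  have hAL : ∀ (t : Xf u v) (k : Fin u) (l : Fin v),
      alphaL r (phiL σa σb) (phiR τa τb) t (Af k) (Bf l)
        = Sum.elim (fun _ => α) (fun _ => ε * α) t := by
    intro t k l
    cases t with
    | inl i => exact hαla i k l
    | inr j => exact hαlb j k l
  have hAR : ∀ (t : Xf u v) (k : Fin u) (l : Fin v),
      alphaR r (phiL σa σb) (phiR τa τb) t (Af k) (Bf l)
        = Sum.elim (fun _ => 1 / α) (fun _ => ε / α) t := by
    intro t k l
    cases t with
    | inl i => exact hαra i k l
    | inr j => exact hαrb j k l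
  have hBL : ∀ (t : Xf u v) (k : Fin u) (l : Fin v),
      betaL r (phiL σa σb) (phiR τa τb) t (Af k) (Bf l)
        = Sum.elim (fun _ => βa) (fun _ => βb) t := by
    intro t k l
    cases t with
    | inl i => exact hβla i k l
    | inr j => exact hβlb j k l
  have hBR : ∀ (t : Xf u v) (k : Fin u) (l : Fin v),
      betaR r (phiL σa σb) (phiR τa τb) t (Af k) (Bf l)
        = Sum.elim (fun _ => -βa / α) (fun _ => -(ε * βb) / α) t := by
    intro t k l
    cases t with
    | inl i => exact hβra i k l
    | inr j => exact hβrb j k l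
  constructor
  · intro H
    have key := H (Af ⟨0, hu⟩) (Af ⟨0, hu⟩) (Bf ⟨0, hv⟩) (Bf ⟨0, hv⟩)
        (Af ⟨0, hu⟩) (Bf ⟨0, hv⟩) (Af ⟨0, hu⟩) (Af ⟨0, hu⟩) (Bf ⟨0, hv⟩) (Bf ⟨0, hv⟩)
        (Af ⟨0, hu⟩) (Af ⟨0, hu⟩)
        le_rfl le_rfl le_rfl le_rfl le_rfl le_rfl le_rfl le_rfl (Af_le_Bf _ _)
        (by rw [hgt3, hgt_self', hgt_self', hgt_AB]; norm_num)
    simp only [LBE, RBE, Finset.Icc_self, Icc_AB, Finset.sum_singleton, sum_pair_AB,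
      phiL_Af, phiL_Bf, phiR_Af, phiR_Bf, hFA, hFR, hFL, hAL, hAR, hBL, hBR,
      Af_inj_iff, Bf_inj_iff, Af_eq_Bf_iff, Bf_eq_Af_iff,
      EmbeddingLike.apply_eq_iff_eq, eq_self_iff_true, and_true, true_and,
      and_false, false_and, if_true, if_false, and_self,
      Sum.elim_inl, Sum.elim_inr, elim_Af, elim_Bf, mul_one, one_mul, mul_zero, zero_mul,
      add_zero, zero_add, neg_neg] at key
    linear_combination key
  · intro hmain
    rcases hε with rfl | rfl <;>
    · intro a b c d e f g h i j k l h1 h2 h3 h4 h5 h6 h7 h8 h9 hht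
      rcases two_trivial (h1.trans (h2.trans h3)) (h4.trans (h5.trans h6))
        (h7.trans (h8.trans h9)) hht with ⟨hab, hcd⟩ | ⟨hab, hef⟩ | ⟨hcd, hef⟩
      · obtain rfl := hab
        obtain rfl := hcd
        obtain rfl : a = g := le_antisymm h1 (h2.trans h3)
        obtain rfl : a = h := le_antisymm (h1.trans h2) h3
        obtain rfl : c = i := le_antisymm h4 (h5.trans h6)
        obtain rfl : c = j := le_antisymm (h4.trans h5) h6
        by_cases hef : e = f
        · obtain rfl := hef
          obtain rfl : e = k := le_antisymm h7 (h8.trans h9)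
          obtain rfl : e = l := le_antisymm (h7.trans h8) h9
          simp only [LBE, RBE, Finset.Icc_self, Icc_AB, Finset.sum_singleton, sum_pair_AB,
            phiL_Af, phiL_Bf, phiR_Af, phiR_Bf, hFA, hFR, hFL, hAL, hAR, hBL, hBR,
            Af_inj_iff, Bf_inj_iff, Af_eq_Bf_iff, Bf_eq_Af_iff,
            EmbeddingLike.apply_eq_iff_eq, eq_self_iff_true, and_true, true_and,
            and_false, false_and, if_true, if_false, and_self,
            Sum.elim_inl, Sum.elim_inr, elim_Af, elim_Bf, mul_one, one_mul,
            mul_zero, zero_mul, add_zero, zero_add, neg_neg]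
        · rcases Xf_le_strict (h7.trans (h8.trans h9)) with hef' | ⟨ie, jf, rfl, rfl⟩
          · exact absurd hef' hef
          rcases Xf_mem_strict h7 (h8.trans h9) with rfl | rfl
          · rcases Xf_mem_strict (h7.trans h8) h9 with rfl | rfl
            · simp only [LBE, RBE, Finset.Icc_self, Icc_AB, Finset.sum_singleton, sum_pair_AB,
                phiL_Af, phiL_Bf, phiR_Af, phiR_Bf, hFA, hFR, hFL, hAL, hAR, hBL, hBR,
                Af_inj_iff, Bf_inj_iff, Af_eq_Bf_iff, Bf_eq_Af_iff,
                EmbeddingLike.apply_eq_iff_eq, eq_self_iff_true, and_true, true_and,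
                and_false, false_and, if_true, if_false, and_self,
                Sum.elim_inl, Sum.elim_inr, elim_Af, elim_Bf, mul_one, one_mul,
                mul_zero, zero_mul, add_zero, zero_add, neg_neg]
              rcases Xf_cases a with ⟨iP1, rfl⟩ | ⟨jP1, rfl⟩ <;>
                rcases Xf_cases c with ⟨iP2, rfl⟩ | ⟨jP2, rfl⟩ <;>
                (try simp only [phiL_Af, phiL_Bf, phiR_Af, phiR_Bf, elim_Af, elim_Bf]) <;>
                (try field_simp) <;>
                first
                  | ring1
                  | linear_combination hmain
                  | linear_combination -hmain
                  | linear_combination α * hmain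
                  | linear_combination -α * hmain
                  | linear_combination α ^ 2 * hmain
                  | linear_combination -α ^ 2 * hmain
                  | linear_combination α ^ 3 * hmain
                  | linear_combination -α ^ 3 * hmain
                  | linear_combination (α + 1) * hmain
                  | linear_combination -(α + 1) * hmain
            · simp only [LBE, RBE, Finset.Icc_self, Icc_AB, Finset.sum_singleton, sum_pair_AB,
                phiL_Af, phiL_Bf, phiR_Af, phiR_Bf, hFA, hFR, hFL, hAL, hAR, hBL, hBR,
                Af_inj_iff, Bf_inj_iff, Af_eq_Bf_iff, Bf_eq_Af_iff,
                EmbeddingLike.apply_eq_iff_eq, eq_self_iff_true, and_true, true_and,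
                and_false, false_and, if_true, if_false, and_self,
                Sum.elim_inl, Sum.elim_inr, elim_Af, elim_Bf, mul_one, one_mul,
                mul_zero, zero_mul, add_zero, zero_add, neg_neg]
              rcases Xf_cases a with ⟨iP1, rfl⟩ | ⟨jP1, rfl⟩ <;>
                rcases Xf_cases c with ⟨iP2, rfl⟩ | ⟨jP2, rfl⟩ <;>
                (try simp only [phiL_Af, phiL_Bf, phiR_Af, phiR_Bf, elim_Af, elim_Bf]) <;>
                (try field_simp) <;>
                first
                  | ring1
                  | linear_combination hmain
                  | linear_combination -hmain
                  | linear_combination α * hmain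
                  | linear_combination -α * hmain
                  | linear_combination α ^ 2 * hmain
                  | linear_combination -α ^ 2 * hmain
                  | linear_combination α ^ 3 * hmain
                  | linear_combination -α ^ 3 * hmain
                  | linear_combination (α + 1) * hmain
                  | linear_combination -(α + 1) * hmain
          · obtain rfl : l = Bf jf := le_antisymm h9 h8
            simp only [LBE, RBE, Finset.Icc_self, Icc_AB, Finset.sum_singleton, sum_pair_AB,
              phiL_Af, phiL_Bf, phiR_Af, phiR_Bf, hFA, hFR, hFL, hAL, hAR, hBL, hBR,
              Af_inj_iff, Bf_inj_iff, Af_eq_Bf_iff, Bf_eq_Af_iff,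
              EmbeddingLike.apply_eq_iff_eq, eq_self_iff_true, and_true, true_and,
              and_false, false_and, if_true, if_false, and_self,
              Sum.elim_inl, Sum.elim_inr, elim_Af, elim_Bf, mul_one, one_mul,
              mul_zero, zero_mul, add_zero, zero_add, neg_neg]
            rcases Xf_cases a with ⟨iP1, rfl⟩ | ⟨jP1, rfl⟩ <;>
              rcases Xf_cases c with ⟨iP2, rfl⟩ | ⟨jP2, rfl⟩ <;>
              (try simp only [phiL_Af, phiL_Bf, phiR_Af, phiR_Bf, elim_Af, elim_Bf]) <;>
              (try field_simp) <;>
              first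
                | ring1
                | linear_combination hmain
                | linear_combination -hmain
                | linear_combination α * hmain
                | linear_combination -α * hmain
                | linear_combination α ^ 2 * hmain
                | linear_combination -α ^ 2 * hmain
                | linear_combination α ^ 3 * hmain
                | linear_combination -α ^ 3 * hmain
                | linear_combination (α + 1) * hmain
                | linear_combination -(α + 1) * hmain
      · obtain rfl := hab
        obtain rfl := hef
        obtain rfl : a = g := le_antisymm h1 (h2.trans h3)
        obtain rfl : a = h := le_antisymm (h1.trans h2) h3
        obtain rfl : e = k := le_antisymm h7 (h8.trans h9)
        obtain rfl : e = l := le_antisymm (h7.trans h8) h9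
        by_cases hcd : c = d
        · obtain rfl := hcd
          obtain rfl : c = i := le_antisymm h4 (h5.trans h6)
          obtain rfl : c = j := le_antisymm (h4.trans h5) h6
          simp only [LBE, RBE, Finset.Icc_self, Icc_AB, Finset.sum_singleton, sum_pair_AB,
            phiL_Af, phiL_Bf, phiR_Af, phiR_Bf, hFA, hFR, hFL, hAL, hAR, hBL, hBR,
            Af_inj_iff, Bf_inj_iff, Af_eq_Bf_iff, Bf_eq_Af_iff,
            EmbeddingLike.apply_eq_iff_eq, eq_self_iff_true, and_true, true_and,
            and_false, false_and, if_true, if_false, and_self,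
            Sum.elim_inl, Sum.elim_inr, elim_Af, elim_Bf, mul_one, one_mul,
            mul_zero, zero_mul, add_zero, zero_add, neg_neg]
        · rcases Xf_le_strict (h4.trans (h5.trans h6)) with hcd' | ⟨ic, jd, rfl, rfl⟩
          · exact absurd hcd' hcd
          rcases Xf_mem_strict h4 (h5.trans h6) with rfl | rfl
          · rcases Xf_mem_strict (h4.trans h5) h6 with rfl | rfl
            · simp only [LBE, RBE, Finset.Icc_self, Icc_AB, Finset.sum_singleton, sum_pair_AB,
                phiL_Af, phiL_Bf, phiR_Af, phiR_Bf, hFA, hFR, hFL, hAL, hAR, hBL, hBR,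
                Af_inj_iff, Bf_inj_iff, Af_eq_Bf_iff, Bf_eq_Af_iff,
                EmbeddingLike.apply_eq_iff_eq, eq_self_iff_true, and_true, true_and,
                and_false, false_and, if_true, if_false, and_self,
                Sum.elim_inl, Sum.elim_inr, elim_Af, elim_Bf, mul_one, one_mul,
                mul_zero, zero_mul, add_zero, zero_add, neg_neg]
              rcases Xf_cases a with ⟨iP1, rfl⟩ | ⟨jP1, rfl⟩ <;>
                rcases Xf_cases e with ⟨iP2, rfl⟩ | ⟨jP2, rfl⟩ <;>
                (try simp only [phiL_Af, phiL_Bf, phiR_Af, phiR_Bf, elim_Af, elim_Bf]) <;>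
                (try field_simp) <;>
                first
                  | ring1
                  | linear_combination hmain
                  | linear_combination -hmain
                  | linear_combination α * hmain
                  | linear_combination -α * hmain
                  | linear_combination α ^ 2 * hmain
                  | linear_combination -α ^ 2 * hmain
                  | linear_combination α ^ 3 * hmain
                  | linear_combination -α ^ 3 * hmain
                  | linear_combination (α + 1) * hmain
                  | linear_combination -(α + 1) * hmain
            · simp only [LBE, RBE, Finset.Icc_self, Icc_AB, Finset.sum_singleton, sum_pair_AB,
                phiL_Af, phiL_Bf, phiR_Af, phiR_Bf, hFA, hFR, hFL, hAL, hAR, hBL, hBR,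
                Af_inj_iff, Bf_inj_iff, Af_eq_Bf_iff, Bf_eq_Af_iff,
                EmbeddingLike.apply_eq_iff_eq, eq_self_iff_true, and_true, true_and,
                and_false, false_and, if_true, if_false, and_self,
                Sum.elim_inl, Sum.elim_inr, elim_Af, elim_Bf, mul_one, one_mul,
                mul_zero, zero_mul, add_zero, zero_add, neg_neg]
              rcases Xf_cases a with ⟨iP1, rfl⟩ | ⟨jP1, rfl⟩ <;>
                rcases Xf_cases e with ⟨iP2, rfl⟩ | ⟨jP2, rfl⟩ <;>
                (try simp only [phiL_Af, phiL_Bf, phiR_Af, phiR_Bf, elim_Af, elim_Bf]) <;>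
                (try field_simp) <;>
                first
                  | ring1
                  | linear_combination hmain
                  | linear_combination -hmain
                  | linear_combination α * hmain
                  | linear_combination -α * hmain
                  | linear_combination α ^ 2 * hmain
                  | linear_combination -α ^ 2 * hmain
                  | linear_combination α ^ 3 * hmain
                  | linear_combination -α ^ 3 * hmain
                  | linear_combination (α + 1) * hmain
                  | linear_combination -(α + 1) * hmain
          · obtain rfl : j = Bf jd := le_antisymm h6 h5
            simp only [LBE, RBE, Finset.Icc_self, Icc_AB, Finset.sum_singleton, sum_pair_AB,
              phiL_Af, phiL_Bf, phiR_Af, phiR_Bf, hFA, hFR, hFL, hAL, hAR, hBL, hBR,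
              Af_inj_iff, Bf_inj_iff, Af_eq_Bf_iff, Bf_eq_Af_iff,
              EmbeddingLike.apply_eq_iff_eq, eq_self_iff_true, and_true, true_and,
              and_false, false_and, if_true, if_false, and_self,
              Sum.elim_inl, Sum.elim_inr, elim_Af, elim_Bf, mul_one, one_mul,
              mul_zero, zero_mul, add_zero, zero_add, neg_neg]
            rcases Xf_cases a with ⟨iP1, rfl⟩ | ⟨jP1, rfl⟩ <;>
              rcases Xf_cases e with ⟨iP2, rfl⟩ | ⟨jP2, rfl⟩ <;>
              (try simp only [phiL_Af, phiL_Bf, phiR_Af, phiR_Bf, elim_Af, elim_Bf]) <;>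
              (try field_simp) <;>
              first
                | ring1
                | linear_combination hmain
                | linear_combination -hmain
                | linear_combination α * hmain
                | linear_combination -α * hmain
                | linear_combination α ^ 2 * hmain
                | linear_combination -α ^ 2 * hmain
                | linear_combination α ^ 3 * hmain
                | linear_combination -α ^ 3 * hmain
                | linear_combination (α + 1) * hmain
                | linear_combination -(α + 1) * hmain
      · obtain rfl := hcd
        obtain rfl := hef
        obtain rfl : c = i := le_antisymm h4 (h5.trans h6)
        obtain rfl : c = j := le_antisymm (h4.trans h5) h6
        obtain rfl : e = k := le_antisymm h7 (h8.trans h9)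
        obtain rfl : e = l := le_antisymm (h7.trans h8) h9
        by_cases hab : a = b
        · obtain rfl := hab
          obtain rfl : a = g := le_antisymm h1 (h2.trans h3)
          obtain rfl : a = h := le_antisymm (h1.trans h2) h3
          simp only [LBE, RBE, Finset.Icc_self, Icc_AB, Finset.sum_singleton, sum_pair_AB,
            phiL_Af, phiL_Bf, phiR_Af, phiR_Bf, hFA, hFR, hFL, hAL, hAR, hBL, hBR,
            Af_inj_iff, Bf_inj_iff, Af_eq_Bf_iff, Bf_eq_Af_iff,
            EmbeddingLike.apply_eq_iff_eq, eq_self_iff_true, and_true, true_and,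
            and_false, false_and, if_true, if_false, and_self,
            Sum.elim_inl, Sum.elim_inr, elim_Af, elim_Bf, mul_one, one_mul,
            mul_zero, zero_mul, add_zero, zero_add, neg_neg]
        · rcases Xf_le_strict (h1.trans (h2.trans h3)) with hab' | ⟨ia, jb, rfl, rfl⟩
          · exact absurd hab' hab
          rcases Xf_mem_strict h1 (h2.trans h3) with rfl | rfl
          · rcases Xf_mem_strict (h1.trans h2) h3 with rfl | rfl
            · simp only [LBE, RBE, Finset.Icc_self, Icc_AB, Finset.sum_singleton, sum_pair_AB,
                phiL_Af, phiL_Bf, phiR_Af, phiR_Bf, hFA, hFR, hFL, hAL, hAR, hBL, hBR,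
                Af_inj_iff, Bf_inj_iff, Af_eq_Bf_iff, Bf_eq_Af_iff,
                EmbeddingLike.apply_eq_iff_eq, eq_self_iff_true, and_true, true_and,
                and_false, false_and, if_true, if_false, and_self,
                Sum.elim_inl, Sum.elim_inr, elim_Af, elim_Bf, mul_one, one_mul,
                mul_zero, zero_mul, add_zero, zero_add, neg_neg]
              rcases Xf_cases c with ⟨iP1, rfl⟩ | ⟨jP1, rfl⟩ <;>
                rcases Xf_cases e with ⟨iP2, rfl⟩ | ⟨jP2, rfl⟩ <;>
                (try simp only [phiL_Af, phiL_Bf, phiR_Af, phiR_Bf, elim_Af, elim_Bf]) <;>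
                (try field_simp) <;>
                first
                  | ring1
                  | linear_combination hmain
                  | linear_combination -hmain
                  | linear_combination α * hmain
                  | linear_combination -α * hmain
                  | linear_combination α ^ 2 * hmain
                  | linear_combination -α ^ 2 * hmain
                  | linear_combination α ^ 3 * hmain
                  | linear_combination -α ^ 3 * hmain
                  | linear_combination (α + 1) * hmain
                  | linear_combination -(α + 1) * hmain
            · simp only [LBE, RBE, Finset.Icc_self, Icc_AB, Finset.sum_singleton, sum_pair_AB,
                phiL_Af, phiL_Bf, phiR_Af, phiR_Bf, hFA, hFR, hFL, hAL, hAR, hBL, hBR,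
                Af_inj_iff, Bf_inj_iff, Af_eq_Bf_iff, Bf_eq_Af_iff,
                EmbeddingLike.apply_eq_iff_eq, eq_self_iff_true, and_true, true_and,
                and_false, false_and, if_true, if_false, and_self,
                Sum.elim_inl, Sum.elim_inr, elim_Af, elim_Bf, mul_one, one_mul,
                mul_zero, zero_mul, add_zero, zero_add, neg_neg]
              rcases Xf_cases c with ⟨iP1, rfl⟩ | ⟨jP1, rfl⟩ <;>
                rcases Xf_cases e with ⟨iP2, rfl⟩ | ⟨jP2, rfl⟩ <;>
                (try simp only [phiL_Af, phiL_Bf, phiR_Af, phiR_Bf, elim_Af, elim_Bf]) <;>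
                (try field_simp) <;>
                first
                  | ring1
                  | linear_combination hmain
                  | linear_combination -hmain
                  | linear_combination α * hmain
                  | linear_combination -α * hmain
                  | linear_combination α ^ 2 * hmain
                  | linear_combination -α ^ 2 * hmain
                  | linear_combination α ^ 3 * hmain
                  | linear_combination -α ^ 3 * hmain
                  | linear_combination (α + 1) * hmain
                  | linear_combination -(α + 1) * hmain
          · obtain rfl : h = Bf jb := le_antisymm h3 h2
            simp only [LBE, RBE, Finset.Icc_self, Icc_AB, Finset.sum_singleton, sum_pair_AB,
              phiL_Af, phiL_Bf, phiR_Af, phiR_Bf, hFA, hFR, hFL, hAL, hAR, hBL, hBR,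
              Af_inj_iff, Bf_inj_iff, Af_eq_Bf_iff, Bf_eq_Af_iff,
              EmbeddingLike.apply_eq_iff_eq, eq_self_iff_true, and_true, true_and,
              and_false, false_and, if_true, if_false, and_self,
              Sum.elim_inl, Sum.elim_inr, elim_Af, elim_Bf, mul_one, one_mul,
              mul_zero, zero_mul, add_zero, zero_add, neg_neg]
            rcases Xf_cases c with ⟨iP1, rfl⟩ | ⟨jP1, rfl⟩ <;>
              rcases Xf_cases e with ⟨iP2, rfl⟩ | ⟨jP2, rfl⟩ <;>
              (try simp only [phiL_Af, phiL_Bf, phiR_Af, phiR_Bf, elim_Af, elim_Bf]) <;>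
              (try field_simp) <;>
              first
                | ring1
                | linear_combination hmain
                | linear_combination -hmain
                | linear_combination α * hmain
                | linear_combination -α * hmain
                | linear_combination α ^ 2 * hmain
                | linear_combination -α ^ 2 * hmain
                | linear_combination α ^ 3 * hmain
                | linear_combination -α ^ 3 * hmain
                | linear_combination (α + 1) * hmain
                | linear_combination -(α + 1) * hmain

end BraidPaper
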